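/- Let M be an Artinian monomial ideal in C[z_1,...,z_n] with staircase S and let σ be a permutation of {1,...,n}. Then ∑_α Vol(S_{σ,α}) = dim_C C[z_1,...,z_n]/M, where the sum is over the outer corners α of S. -/

import Mathlib

open MvPolynomial MeasureTheory

def lcmOf {n r : ℕ} (a : Fin r → Fin n → ℕ) (I : Finset (Fin r)) : Fin n → ℕ :=
  fun j => I.sup fun i => a i j

def Scarf {n r : ℕ} (a : Fin r → Fin n → ℕ) : Set (Finset (Fin r)) :=
  {I | ∀ J : Finset (Fin r), lcmOf a J = lcmOf a I → J = I}

def StrictlyDivides {n : ℕ} (b c : Fin n → ℕ) : Prop :=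
  ∀ ℓ, b ℓ ≤ c ℓ ∧ (0 < c ℓ → b ℓ < c ℓ)

def Generic {n : ℕ} {ι : Type*} (a : ι → Fin n → ℕ) : Prop :=
  ∀ i j, i ≠ j → (∃ ℓ, 0 < a i ℓ ∧ a i ℓ = a j ℓ) →
    ∃ k, StrictlyDivides (a k) (a i ⊔ a j)

def ArtinianGens {n : ℕ} {ι : Type*} (a : ι → Fin n → ℕ) : Prop :=
  ∀ ℓ : Fin n, ∃ i, ∀ m, m ≠ ℓ → a i m = 0

def MinimalGens {n : ℕ} {ι : Type*} (a : ι → Fin n → ℕ) : Prop :=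
  ∀ i j, a i ≤ a j → i = j

def genStaircase {n r : ℕ} (a : Fin r → Fin n → ℕ) : Set (Fin n → ℝ) :=
  {x | (∀ j, 0 < x j) ∧ ∀ i, ∃ j, x j ≤ (a i j : ℝ)}

def outerCorners {n : ℕ} (S : Set (Fin n → ℝ)) : Set (Fin n → ℝ) :=
  {α | α ∈ S ∧ ∀ x ∈ S, α ≤ x → x = α}

def lexGT {n : ℕ} (σ : Equiv.Perm (Fin n)) (α β : Fin n → ℝ) : Prop :=
  ∃ k, (∀ ℓ < k, α (σ ℓ) = β (σ ℓ)) ∧ β (σ k) < α (σ k)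

def piece {n : ℕ} (S : Set (Fin n → ℝ)) (σ : Equiv.Perm (Fin n)) (α : Fin n → ℝ) :
    Set (Fin n → ℝ) :=
  {x | x ∈ S ∧ x ≤ α ∧ ∀ β ∈ outerCorners S, lexGT σ β α → ¬ x ≤ β}

noncomputable def monIdeal {n : ℕ} (B : Set (Fin n → ℕ)) : Ideal (MvPolynomial (Fin n) ℂ) :=
  Ideal.span ((fun b => monomial (Finsupp.equivFunOnFinite.symm b) (1:ℂ)) '' B)

def IsMonomialIdeal {n : ℕ} (M : Ideal (MvPolynomial (Fin n) ℂ)) : Prop :=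
  ∃ B, M = monIdeal B

def staircaseI {n : ℕ} (M : Ideal (MvPolynomial (Fin n) ℂ)) : Set (Fin n → ℝ) :=
  {x | (∀ i, 0 < x i) ∧
    monomial (Finsupp.equivFunOnFinite.symm fun i => ⌈x i⌉₊ - 1) (1:ℂ) ∉ M}

def stdT {n : ℕ} (M : Ideal (MvPolynomial (Fin n) ℂ)) : Set (Fin n → ℕ) :=
  {b | monomial (Finsupp.equivFunOnFinite.symm b) (1:ℂ) ∉ M}

lemma mem_monIdeal_monomial {n : ℕ} (B : Set (Fin n → ℕ)) (d : (Fin n) →₀ ℕ) :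
    monomial d (1:ℂ) ∈ monIdeal B ↔ ∃ s ∈ B, Finsupp.equivFunOnFinite.symm s ≤ d := by
  rw [monIdeal, show ((fun b => monomial (Finsupp.equivFunOnFinite.symm b) (1:ℂ)) '' B)
      = (fun s => monomial s (1:ℂ)) '' (Finsupp.equivFunOnFinite.symm '' B) by
    rw [Set.image_image], mem_ideal_span_monomial_image]
  simp only [support_monomial, if_neg (one_ne_zero), Finset.mem_singleton, forall_eq,
    Set.mem_image, exists_exists_and_eq_and]

lemma li_std {n : ℕ} (M : Ideal (MvPolynomial (Fin n) ℂ)) (hmon : IsMonomialIdeal M) :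
    LinearIndependent ℂ fun b : stdT M =>
      Ideal.Quotient.mk M (monomial (Finsupp.equivFunOnFinite.symm (b : Fin n → ℕ)) (1:ℂ)) := by
  obtain ⟨B, rfl⟩ := hmon
  rw [linearIndependent_iff']
  intro s g hsum b hb
  by_contra hg
  set p : MvPolynomial (Fin n) ℂ :=
    ∑ i ∈ s, g i • monomial (Finsupp.equivFunOnFinite.symm (i : Fin n → ℕ)) (1:ℂ) with hp
  have hsum' : Ideal.Quotient.mkₐ ℂ (monIdeal B) p = 0 := by
    rw [hp, map_sum]
    simpa [Ideal.Quotient.mkₐ_eq_mk, _root_.map_smul] using hsum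
  have hpM : p ∈ monIdeal B := by
    rwa [← Ideal.Quotient.eq_zero_iff_mem, ← Ideal.Quotient.mkₐ_eq_mk ℂ]
  have hcoeff : p.coeff (Finsupp.equivFunOnFinite.symm (b : Fin n → ℕ)) = g b := by
    rw [hp, MvPolynomial.coeff_sum]
    rw [Finset.sum_eq_single b]
    · simp
    · intro c hc hcb
      have : Finsupp.equivFunOnFinite.symm (c : Fin n → ℕ)
          ≠ Finsupp.equivFunOnFinite.symm (b : Fin n → ℕ) := by
        simp only [ne_eq, EmbeddingLike.apply_eq_iff_eq]
        exact fun h => hcb (Subtype.ext h)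
      simp [coeff_monomial, this]
    · exact fun h => absurd hb h
  have hsupp : Finsupp.equivFunOnFinite.symm (b : Fin n → ℕ) ∈ p.support :=
    mem_support_iff.mpr (hcoeff ▸ hg)
  rw [monIdeal, show ((fun b => monomial (Finsupp.equivFunOnFinite.symm b) (1:ℂ)) '' B)
      = (fun s => monomial s (1:ℂ)) '' (Finsupp.equivFunOnFinite.symm '' B) by
    rw [Set.image_image], mem_ideal_span_monomial_image] at hpM
  obtain ⟨si, hsi, hle⟩ := hpM _ hsupp
  obtain ⟨s', hs', rfl⟩ := hsi
  exact b.2 ((mem_monIdeal_monomial B _).mpr ⟨s', hs', hle⟩)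

lemma span_std {n : ℕ} (M : Ideal (MvPolynomial (Fin n) ℂ)) :
    ⊤ ≤ Submodule.span ℂ (Set.range fun b : stdT M =>
      Ideal.Quotient.mk M (monomial (Finsupp.equivFunOnFinite.symm (b : Fin n → ℕ)) (1:ℂ))) := by
  intro x _
  obtain ⟨p, rfl⟩ := Ideal.Quotient.mk_surjective x
  rw [← support_sum_monomial_coeff p, map_sum]
  refine Submodule.sum_mem _ fun m hm => ?_
  have : (monomial m) (MvPolynomial.coeff m p) = MvPolynomial.coeff m p • monomial m (1:ℂ) := by
    simp [smul_monomial]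
  rw [this, show (Ideal.Quotient.mk M) (MvPolynomial.coeff m p • monomial m (1:ℂ))
      = MvPolynomial.coeff m p • Ideal.Quotient.mk M (monomial m (1:ℂ)) by
    rw [← Ideal.Quotient.mkₐ_eq_mk ℂ, _root_.map_smul]]
  refine Submodule.smul_mem _ _ ?_
  by_cases h : Finsupp.equivFunOnFinite m ∈ stdT M
  · apply Submodule.subset_span
    exact ⟨⟨_, h⟩, by simp⟩
  · have : monomial m (1:ℂ) ∈ M := by
      simpa [stdT] using h
    rw [Ideal.Quotient.eq_zero_iff_mem.mpr this]
    exact Submodule.zero_mem _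

lemma std_finite {n : ℕ} (M : Ideal (MvPolynomial (Fin n) ℂ)) (hmon : IsMonomialIdeal M)
    (hart : FiniteDimensional ℂ (MvPolynomial (Fin n) ℂ ⧸ M)) : (stdT M).Finite := by
  have : Finite ↥(stdT M) := (li_std M hmon).finite
  exact Set.toFinite _

lemma finrank_eq_card_std {n : ℕ} (M : Ideal (MvPolynomial (Fin n) ℂ))
    (hmon : IsMonomialIdeal M)
    (hart : FiniteDimensional ℂ (MvPolynomial (Fin n) ℂ ⧸ M)) :
    Module.finrank ℂ (MvPolynomial (Fin n) ℂ ⧸ M) = Nat.card (stdT M) := by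
  have fin : Finite ↥(stdT M) := (li_std M hmon).finite
  cases nonempty_fintype ↥(stdT M)
  rw [Module.finrank_eq_card_basis (Module.Basis.mk (li_std M hmon) (span_std M)),
    Nat.card_eq_fintype_card]

def box {n : ℕ} (b : Fin n → ℕ) : Set (Fin n → ℝ) :=
  Set.univ.pi fun i => Set.Ioc (b i : ℝ) ((b i : ℝ) + 1)

lemma mem_box_iff {n : ℕ} (b : Fin n → ℕ) (x : Fin n → ℝ) :
    x ∈ box b ↔ (∀ i, 0 < x i) ∧ (fun i => ⌈x i⌉₊ - 1) = b := by
  simp only [box, Set.mem_pi, Set.mem_univ, forall_true_left, Set.mem_Ioc]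
  constructor
  · intro h
    have hpos : ∀ i, 0 < x i := fun i =>
      lt_of_le_of_lt (by positivity) (h i).1
    refine ⟨hpos, funext fun i => ?_⟩
    have hceil : ⌈x i⌉₊ = b i + 1 := by
      rw [Nat.ceil_eq_iff (Nat.succ_ne_zero _)]
      constructor
      · simpa using (h i).1
      · push_cast
        exact (h i).2
    simp [hceil]
  · rintro ⟨hpos, heq⟩ i
    have h1 : 0 < ⌈x i⌉₊ := Nat.ceil_pos.mpr (hpos i)
    have hceil : ⌈x i⌉₊ = b i + 1 := by
      have := congrFun heq i
      omega
    have := (Nat.ceil_eq_iff (n := b i + 1) (Nat.succ_ne_zero _)).mp hceil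
    constructor
    · simpa using this.1
    · have := this.2
      push_cast at this
      exact this


lemma staircase_eq {n : ℕ} (M : Ideal (MvPolynomial (Fin n) ℂ)) :
    staircaseI M = ⋃ b ∈ stdT M, box b := by
  ext x
  simp only [staircaseI, Set.mem_setOf_eq, Set.mem_iUnion, mem_box_iff]
  constructor
  · rintro ⟨hpos, hmem⟩
    exact ⟨_, hmem, hpos, rfl⟩
  · rintro ⟨b, hb, hpos, rfl⟩
    exact ⟨hpos, hb⟩

lemma box_disjoint {n : ℕ} {b b' : Fin n → ℕ} {x : Fin n → ℝ}
    (h : x ∈ box b) (h' : x ∈ box b') : b = b' := by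
  rw [mem_box_iff] at h h'
  rw [← h.2, ← h'.2]

lemma box_measurable {n : ℕ} (b : Fin n → ℕ) : MeasurableSet (box b) :=
  MeasurableSet.univ_pi fun i => measurableSet_Ioc

lemma volume_box {n : ℕ} (b : Fin n → ℕ) : volume (box b) = 1 := by
  rw [box, volume_pi_pi]
  simp

lemma staircase_measurable {n : ℕ} (M : Ideal (MvPolynomial (Fin n) ℂ))
    (hT : (stdT M).Finite) : MeasurableSet (staircaseI M) := by
  rw [staircase_eq]
  exact hT.measurableSet_biUnion fun b _ => box_measurable b

lemma volume_staircase {n : ℕ} (M : Ideal (MvPolynomial (Fin n) ℂ))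
    (hT : (stdT M).Finite) : volume (staircaseI M) = Nat.card (stdT M) := by
  rw [staircase_eq, ← hT.coe_toFinset]
  have : ⋃ b ∈ (hT.toFinset : Set (Fin n → ℕ)), box b = ⋃ b ∈ hT.toFinset, box b := by
    simp
  rw [this, measure_biUnion_finset ?hd fun b _ => box_measurable b]
  · simp only [volume_box, Finset.sum_const, nsmul_eq_mul, mul_one]
    rw [Nat.card_coe_set_eq, Set.ncard_coe_finset]
  case hd =>
    intro b hb b' hb' hne
    refine Set.disjoint_left.mpr fun x hx hx' => hne (box_disjoint hx hx')




noncomputable instance lexLinearOrder (n : ℕ) : LinearOrder (Lex (Fin n → ℝ)) :=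
  @Pi.Lex.linearOrder (Fin n) (fun _ => ℝ) inferInstance
    (inferInstanceAs (WellFoundedLT (Fin n))) (fun _ => inferInstance)

noncomputable def K {n : ℕ} (σ : Equiv.Perm (Fin n)) (α : Fin n → ℝ) : Lex (Fin n → ℝ) :=
  toLex fun ℓ => α (σ ℓ)

lemma K_injective {n : ℕ} (σ : Equiv.Perm (Fin n)) : Function.Injective (K σ) := by
  intro α β h
  funext i
  have h' : (fun ℓ => α (σ ℓ)) = fun ℓ => β (σ ℓ) := toLex.injective h
  simpa using congrFun h' (σ.symm i)

lemma lexGT_iff_K {n : ℕ} (σ : Equiv.Perm (Fin n)) (α β : Fin n → ℝ) :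
    lexGT σ β α ↔ K σ α < K σ β := by
  constructor
  · rintro ⟨k, h1, h2⟩
    exact ⟨k, fun j hj => (h1 j hj).symm, h2⟩
  · rintro ⟨k, h1, h2⟩
    exact ⟨k, fun j hj => (h1 j hj).symm, h2⟩

lemma lexGT_total {n : ℕ} (σ : Equiv.Perm (Fin n)) {α β : Fin n → ℝ} (h : α ≠ β) :
    lexGT σ α β ∨ lexGT σ β α := by
  have hK : K σ α ≠ K σ β := fun hc => h (K_injective σ hc)
  rcases Ne.lt_or_gt hK with h' | h'
  · exact Or.inr ((lexGT_iff_K σ α β).mpr h')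
  · exact Or.inl ((lexGT_iff_K σ β α).mpr h')

-- corners are exactly of the form b+1 for suitable b ∈ stdT
lemma corner_eq_succ {n : ℕ} (M : Ideal (MvPolynomial (Fin n) ℂ)) {α : Fin n → ℝ}
    (hα : α ∈ outerCorners (staircaseI M)) :
    ∃ b ∈ stdT M, α = fun i => (b i : ℝ) + 1 := by
  obtain ⟨hαS, hmax⟩ := hα
  rw [staircase_eq] at hαS
  simp only [Set.mem_iUnion] at hαS
  obtain ⟨b, hb, hbox⟩ := hαS
  refine ⟨b, hb, ?_⟩
  have hsucc : (fun i => (b i : ℝ) + 1) ∈ staircaseI M := by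
    rw [staircase_eq]
    simp only [Set.mem_iUnion]
    refine ⟨b, hb, ?_⟩
    simp [box, Set.mem_pi]
  have hle : α ≤ fun i => (b i : ℝ) + 1 := by
    intro i
    simp only [box, Set.mem_pi, Set.mem_univ, forall_true_left, Set.mem_Ioc] at hbox
    exact (hbox i).2
  exact (hmax _ hsucc hle).symm

lemma corners_finite {n : ℕ} (M : Ideal (MvPolynomial (Fin n) ℂ)) (hT : (stdT M).Finite) :
    (outerCorners (staircaseI M)).Finite := by
  apply Set.Finite.subset (hT.image fun b => fun i => (b i : ℝ) + 1)
  intro α hα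
  obtain ⟨b, hb, rfl⟩ := corner_eq_succ M hα
  exact ⟨b, hb, rfl⟩

lemma exists_corner_above {n : ℕ} (M : Ideal (MvPolynomial (Fin n) ℂ)) (hT : (stdT M).Finite)
    {x : Fin n → ℝ} (hx : x ∈ staircaseI M) :
    ∃ α ∈ outerCorners (staircaseI M), x ≤ α := by
  rw [staircase_eq] at hx
  simp only [Set.mem_iUnion] at hx
  obtain ⟨b, hb, hbox⟩ := hx
  set U : Set (Fin n → ℕ) := {b' ∈ stdT M | b ≤ b'} with hU
  have hUfin : U.Finite := hT.subset fun b' hb' => hb'.1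
  have hUne : U.Nonempty := ⟨b, hb, le_refl b⟩
  obtain ⟨c, hc, hcmax⟩ := Set.Finite.exists_maximalFor id U hUfin hUne
  simp only [id_eq] at hcmax
  have hcS : (fun i => (c i : ℝ) + 1) ∈ staircaseI M := by
    rw [staircase_eq]
    simp only [Set.mem_iUnion]
    exact ⟨c, hc.1, by simp [box, Set.mem_pi]⟩
  refine ⟨fun i => (c i : ℝ) + 1, ⟨hcS, ?_⟩, ?_⟩
  · intro y hy hley
    rw [staircase_eq] at hy
    simp only [Set.mem_iUnion] at hy
    obtain ⟨b', hb', hybox⟩ := hy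
    simp only [box, Set.mem_pi, Set.mem_univ, forall_true_left, Set.mem_Ioc] at hybox
    have hcb' : c ≤ b' := by
      intro i
      have h1 : (c i : ℝ) + 1 ≤ y i := hley i
      have h2 : y i ≤ (b' i : ℝ) + 1 := (hybox i).2
      have : (c i : ℝ) ≤ b' i := by linarith
      exact_mod_cast this
    have hb'U : b' ∈ U := ⟨hb', le_trans hc.2 hcb'⟩
    have : c = b' := le_antisymm hcb' (hcmax hb'U hcb')
    subst this
    funext i
    exact le_antisymm ((hybox i).2) (hley i)
  · intro i
    simp only [box, Set.mem_pi, Set.mem_univ, forall_true_left, Set.mem_Ioc] at hbox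
    have h1 : x i ≤ (b i : ℝ) + 1 := (hbox i).2
    have h2 : (b i : ℝ) ≤ c i := by exact_mod_cast hc.2 i
    show x i ≤ (c i : ℝ) + 1
    linarith

lemma piece_eq {n : ℕ} (S : Set (Fin n → ℝ)) (σ : Equiv.Perm (Fin n)) (α : Fin n → ℝ) :
    piece S σ α = (S ∩ Set.Iic α) ∩
      ⋂ β ∈ {β ∈ outerCorners S | lexGT σ β α}, (Set.Iic β)ᶜ := by
  ext x
  simp only [piece, Set.mem_setOf_eq, Set.mem_inter_iff, Set.mem_Iic, Set.mem_iInter,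
    Set.mem_compl_iff, Set.mem_sep_iff, and_imp]
  tauto

lemma Iic_measurable {n : ℕ} (α : Fin n → ℝ) : MeasurableSet (Set.Iic α) := by
  rw [← Set.pi_univ_Iic]
  exact MeasurableSet.univ_pi fun i => measurableSet_Iic

lemma piece_measurable {n : ℕ} (M : Ideal (MvPolynomial (Fin n) ℂ)) (hT : (stdT M).Finite)
    (σ : Equiv.Perm (Fin n)) (α : Fin n → ℝ) :
    MeasurableSet (piece (staircaseI M) σ α) := by
  rw [piece_eq]
  refine (((staircase_measurable M hT).inter (Iic_measurable α)).inter ?_)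
  refine MeasurableSet.biInter ?_ fun β _ => (Iic_measurable β).compl
  exact ((corners_finite M hT).subset (Set.sep_subset _ _)).countable

lemma piece_disjoint {n : ℕ} (S : Set (Fin n → ℝ)) (σ : Equiv.Perm (Fin n))
    {α α' : Fin n → ℝ} (hα : α ∈ outerCorners S) (hα' : α' ∈ outerCorners S)
    (hne : α ≠ α') : Disjoint (piece S σ α) (piece S σ α') := by
  rw [Set.disjoint_left]
  rintro x ⟨_, hxα, hxa⟩ ⟨_, hxα', hxa'⟩
  rcases lexGT_total σ hne with h | h
  · exact hxa' α hα h hxα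
  · exact hxa α' hα' h hxα'

lemma piece_cover {n : ℕ} (M : Ideal (MvPolynomial (Fin n) ℂ)) (hT : (stdT M).Finite)
    (σ : Equiv.Perm (Fin n)) :
    staircaseI M = ⋃ α ∈ outerCorners (staircaseI M), piece (staircaseI M) σ α := by
  apply Set.Subset.antisymm
  · intro x hx
    set C : Set (Fin n → ℝ) := {α ∈ outerCorners (staircaseI M) | x ≤ α} with hCdef
    have hCfin : C.Finite := (corners_finite M hT).subset (Set.sep_subset _ _)
    have hCne : C.Nonempty := by
      obtain ⟨α, hα, hle⟩ := exists_corner_above M hT hx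
      exact ⟨α, hα, hle⟩
    obtain ⟨α, hαC, hαmax⟩ := Set.Finite.exists_maximalFor (K σ) C hCfin hCne
    simp only [Set.mem_iUnion]
    refine ⟨α, hαC.1, hx, hαC.2, fun β hβ hgt hxβ => ?_⟩
    have hβC : β ∈ C := ⟨hβ, hxβ⟩
    have hlt : K σ α < K σ β := (lexGT_iff_K σ α β).mp hgt
    exact absurd (hαmax hβC hlt.le) (not_le.mpr hlt)
  · intro x hx
    simp only [Set.mem_iUnion] at hx
    obtain ⟨α, _, hxS, _⟩ := hx
    exact hxS

/-- for an Artinian monomial ideal `M` and any permutation `σ`, the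
sum over the outer corners `α` of the staircase of the volumes of the partition
pieces `S_{σ,α}` equals `dim_ℂ ℂ[z]/M`. -/
theorem stmt14 {n : ℕ} (M : Ideal (MvPolynomial (Fin n) ℂ))
    (hmon : IsMonomialIdeal M)
    (hart : FiniteDimensional ℂ (MvPolynomial (Fin n) ℂ ⧸ M))
    (σ : Equiv.Perm (Fin n)) :
    ∑' α : outerCorners (staircaseI M),
        volume (piece (staircaseI M) σ (α : Fin n → ℝ)) =
      (Module.finrank ℂ (MvPolynomial (Fin n) ℂ ⧸ M) : ENNReal) := by
  have hT : (stdT M).Finite := std_finite M hmon hart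
  have hC : (outerCorners (staircaseI M)).Finite := corners_finite M hT
  haveI : Fintype ↥(outerCorners (staircaseI M)) := hC.fintype
  rw [tsum_fintype]
  have h1 : ∑ α ∈ hC.toFinset, volume (piece (staircaseI M) σ α)
      = ∑ α : ↥(outerCorners (staircaseI M)), volume (piece (staircaseI M) σ ↑α) := by
    rw [← Finset.sum_coe_sort hC.toFinset (fun α => volume (piece (staircaseI M) σ α))]
    exact Fintype.sum_equiv (Equiv.subtypeEquivRight fun x => hC.mem_toFinset) _ _ fun i => rfl
  rw [← h1, ← measure_biUnion_finset ?hd (fun α _ => piece_measurable M hT σ α)]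
  · have h2 : ⋃ α ∈ hC.toFinset, piece (staircaseI M) σ α = staircaseI M := by
      conv_rhs => rw [piece_cover M hT σ]
      ext x
      simp [Set.Finite.mem_toFinset]
    rw [h2, volume_staircase M hT, finrank_eq_card_std M hmon hart]
  case hd =>
    intro α hα β hβ hne
    exact piece_disjoint _ σ (hC.mem_toFinset.mp hα) (hC.mem_toFinset.mp hβ) hne
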